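/- Let X be a normed lattice with norm completion X̃. The following are equivalent: (1) X is majorizing in X̃; (2) every norm Cauchy sequence in X has an order bounded subsequence; (3) every increasing norm Cauchy sequence in X is order bounded; (4) every norm Cauchy sequence in X has a relatively uniformly Cauchy subsequence; (5) every element of X̃ is a relative uniform limit in X̃ of a sequence in X with regulator in X; (6) the relative uniform completion X^ru equals X̃. -/

import Mathlib

open Filter Set

section Defs

variable (X : Type*) [Lattice X] [AddCommGroup X] [Module ℝ X]

/-- Archimedean property for a vector lattice. -/
def VLArchimedean : Prop := ∀ x y : X, (∀ n : ℕ, n • x ≤ y) → x ≤ 0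

variable {X}

/-- `Y` is a sublattice: a linear subspace closed under `⊔`. -/
def IsVLSublattice (Y : Set X) : Prop :=
  (0 : X) ∈ Y ∧ (∀ a ∈ Y, ∀ b ∈ Y, a + b ∈ Y) ∧
    (∀ (c : ℝ), ∀ a ∈ Y, c • a ∈ Y) ∧ (∀ a ∈ Y, ∀ b ∈ Y, a ⊔ b ∈ Y)

/-- `Y` is majorizing in `X`. -/
def Majorizing (Y : Set X) : Prop := ∀ x : X, 0 ≤ x → ∃ y ∈ Y, x ≤ y

/-- Relative uniform convergence of a sequence with regulator `e`. -/
def RUTendsto (x : ℕ → X) (l e : X) : Prop :=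
  0 ≤ e ∧ ∀ ε : ℝ, 0 < ε → ∃ N, ∀ n ≥ N, |x n - l| ≤ ε • e

/-- Relative uniform Cauchy sequence with regulator `e`. -/
def RUCauchy (x : ℕ → X) (e : X) : Prop :=
  0 ≤ e ∧ ∀ ε : ℝ, 0 < ε → ∃ N, ∀ n ≥ N, ∀ m ≥ N, |x n - x m| ≤ ε • e

/-- Relative uniform convergence of a net with regulator `e`. -/
def RUTendstoNet {ι : Type*} [Preorder ι] (x : ι → X) (l e : X) : Prop :=
  0 ≤ e ∧ ∀ ε : ℝ, 0 < ε → ∃ α₀, ∀ α ≥ α₀, |x α - l| ≤ ε • e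

/-- Relative uniform Cauchy net with regulator `e`. -/
def RUCauchyNet {ι : Type*} [Preorder ι] (x : ι → X) (e : X) : Prop :=
  0 ≤ e ∧ ∀ ε : ℝ, 0 < ε → ∃ α₀, ∀ α ≥ α₀, ∀ β ≥ α₀, |x α - x β| ≤ ε • e

/-- Uniform adherence of a set: all relative uniform limits of sequences from `A`. -/
def uAdh (A : Set X) : Set X :=
  {l | ∃ x : ℕ → X, (∀ n, x n ∈ A) ∧ ∃ e, RUTendsto x l e}

/-- `A` is uniformly closed. -/
def RUClosed (A : Set X) : Prop := uAdh A ⊆ A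

/-- Uniform closure: the least uniformly closed superset of `A`. -/
def uClosure (A : Set X) : Set X := ⋂₀ {B : Set X | A ⊆ B ∧ RUClosed B}

variable (X)

/-- Relative uniform completeness (for sequences). -/
def RUComplete : Prop :=
  ∀ x : ℕ → X, (∃ e, RUCauchy x e) → ∃ l e, RUTendsto x l e

variable {X}

/-- Relative uniform completeness of a sublattice `Y` (regulators taken in `Y`). -/
def RUCompleteIn (Y : Set X) : Prop :=
  ∀ x : ℕ → X, (∀ n, x n ∈ Y) → (∃ e ∈ Y, RUCauchy x e) →
    ∃ l ∈ Y, ∃ e ∈ Y, RUTendsto x l e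

/-- An (order) ideal of a vector lattice: a solid linear subspace. -/
def IsVLIdeal (I : Set X) : Prop :=
  (0 : X) ∈ I ∧ (∀ a ∈ I, ∀ b ∈ I, a + b ∈ I) ∧ (∀ (c : ℝ), ∀ a ∈ I, c • a ∈ I) ∧
    ∀ x : X, ∀ y ∈ I, |x| ≤ |y| → x ∈ I

/-- The ideal generated by a set. -/
def idealGen (Y : Set X) : Set X := ⋂₀ {I : Set X | Y ⊆ I ∧ IsVLIdeal I}

/-- `B` is a projection band: an ideal along which the space decomposes. -/
def IsProjectionBand (B : Set X) : Prop :=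
  IsVLIdeal B ∧ ∀ x : X, ∃ b ∈ B, ∃ d : X, (∀ y ∈ B, |d| ⊓ |y| = 0) ∧ x = b + d

end Defs
section L1
variable {G : Type*} [Lattice G] [AddCommGroup G] [CovariantClass G G (·+·) (·≤·)]
lemma inf_add_le3 {a b c : G} (ha : 0 ≤ a) (hb : 0 ≤ b) (hc : 0 ≤ c) :
    a ⊓ (b + c) ≤ a ⊓ b + a ⊓ c := by
  have h1 : a ⊓ (b + c) - b ≤ a ⊓ c := by
    refine le_inf ?_ ?_
    · exact (sub_le_self _ hb).trans inf_le_left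
    · rw [sub_le_iff_le_add, add_comm]; exact inf_le_right
  have h2 : a ⊓ (b + c) - a ⊓ c ≤ a ⊓ b := by
    refine le_inf ?_ ?_
    · exact (sub_le_self _ (le_inf ha hc)).trans inf_le_left
    · rw [sub_le_iff_le_add]; exact (sub_le_iff_le_add.mp h1).trans_eq (add_comm _ _)
  calc a ⊓ (b + c) = (a ⊓ (b + c) - a ⊓ c) + a ⊓ c := by abel
  _ ≤ a ⊓ b + a ⊓ c := add_le_add_left h2 _
end L1


section Pos
variable {E : Type*} [NormedAddCommGroup E] [Lattice E] [HasSolidNorm E] [IsOrderedAddMonoid E] [NormedSpace ℝ E]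

lemma natsmul_nonneg' {b : E} (hb : 0 ≤ b) (n : ℕ) : (0:E) ≤ (n : ℝ) • b := by
  rw [Nat.cast_smul_eq_nsmul]; exact nsmul_nonneg hb n

lemma inf_natsmul_eq_zero {a b : E} (ha : 0 ≤ a) (hb : 0 ≤ b) (hab : a ⊓ b = 0) :
    ∀ n : ℕ, a ⊓ ((n : ℝ) • b) = 0 := by
  intro n
  induction n with
  | zero => simp [inf_eq_right.mpr ha]
  | succ k ih =>
    refine le_antisymm ?_ (le_inf ha (natsmul_nonneg' hb _))
    have : a ⊓ ((k+1 : ℕ) • b : E) ≤ a ⊓ b + a ⊓ ((k:ℝ) • b) := by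
      have := inf_add_le3 (a := a) (b := b) (c := (k:ℝ) • b) ha hb (natsmul_nonneg' hb k)
      calc a ⊓ ((k+1 : ℕ) • b : E) = a ⊓ (b + (k:ℝ) • b) := by
            rw [← Nat.cast_smul_eq_nsmul ℝ]; push_cast; rw [add_smul, one_smul, add_comm]
        _ ≤ a ⊓ b + a ⊓ ((k:ℝ) • b) := this
    rw [← Nat.cast_smul_eq_nsmul ℝ] at this
    simpa [hab, ih] using this

lemma nonneg_of_natsmul_nonneg {y : E} {n : ℕ} (hn : 0 < n) (h : 0 ≤ (n : ℝ) • y) : 0 ≤ y := by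
  have hdec := posPart_sub_negPart y
  have hdisj : y⁻ ⊓ y⁺ = 0 := by rw [inf_comm]; exact posPart_inf_negPart_eq_zero y
  have h1 : (n:ℝ) • y⁻ ≤ (n:ℝ) • y⁺ := by
    have : (0:E) ≤ (n:ℝ) • (y⁺ - y⁻) := by rwa [hdec]
    rw [smul_sub, sub_nonneg] at this; exact this
  have h2 : y⁻ ≤ (n:ℝ) • y⁻ := by
    have : (0:E) ≤ ((n:ℝ) - 1) • y⁻ := by
      have : ((n:ℝ) - 1) = ((n - 1 : ℕ) : ℝ) := by
        have := Nat.one_le_iff_ne_zero.mpr hn.ne'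
        push_cast [Nat.cast_sub this]; ring
      rw [this]; exact natsmul_nonneg' (negPart_nonneg y) _
    calc y⁻ = 1 • y⁻ := (one_smul ℝ _).symm
      _ ≤ ((n:ℝ) - 1) • y⁻ + 1 • y⁻ := le_add_of_nonneg_left this
      _ = (n:ℝ) • y⁻ := by rw [← add_smul]; ring_nf
  have h3 : y⁻ ≤ y⁻ ⊓ ((n:ℝ) • y⁺) :=
    le_inf le_rfl (h2.trans h1)
  have h4 : y⁻ ⊓ ((n:ℝ) • y⁺) = 0 :=
    inf_natsmul_eq_zero (negPart_nonneg y) (posPart_nonneg y) hdisj n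
  have h5 : y⁻ = 0 := le_antisymm (h4 ▸ h3) (negPart_nonneg y)
  have := hdec
  rw [h5, sub_zero] at this
  exact this ▸ posPart_nonneg y

lemma rsmul_nonneg {c : ℝ} {x : E} (hc : 0 ≤ c) (hx : 0 ≤ x) : 0 ≤ c • x := by
  -- first rationals
  have hQ : ∀ q : ℚ, 0 ≤ q → (0:E) ≤ (q:ℝ) • x := by
    intro q hq
    have hden : 0 < q.den := q.pos
    apply nonneg_of_natsmul_nonneg hden
    rw [smul_smul]
    have : (q.den : ℝ) * (q : ℝ) = ((q.num.toNat : ℕ) : ℝ) := by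
      rw [Rat.cast_def]
      have hd : (q.den : ℝ) ≠ 0 := by exact_mod_cast hden.ne'
      field_simp
      exact_mod_cast (Int.toNat_of_nonneg (Rat.num_nonneg.mpr hq)).symm
    rw [this]
    exact natsmul_nonneg' hx _
  -- now reals by density
  have hex : ∀ k : ℕ, ∃ q : ℚ, c < (q:ℝ) ∧ (q:ℝ) < c + 1/(k+1) := fun k =>
    exists_rat_btwn (lt_add_of_pos_right c (by positivity))
  choose q hq1 hq2 using hex
  have hqc : Filter.Tendsto (fun k : ℕ => ((q k : ℝ))) Filter.atTop (nhds c) := by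
    have h0 : Filter.Tendsto (fun k : ℕ => c + 1/(k+1 : ℝ)) Filter.atTop (nhds c) := by
      have := tendsto_one_div_add_atTop_nhds_zero_nat (𝕜 := ℝ)
      simpa using (tendsto_const_nhds (x := c)).add this
    exact tendsto_of_tendsto_of_tendsto_of_le_of_le
      (tendsto_const_nhds) h0 (fun k => (hq1 k).le) (fun k => (hq2 k).le)
  have hlim : Filter.Tendsto (fun k : ℕ => ((q k : ℝ)) • x) Filter.atTop (nhds (c • x)) :=
    hqc.smul_const x
  refine ge_of_tendsto hlim (Filter.Eventually.of_forall fun k => ?_)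
  exact hQ (q k) (by exact_mod_cast (hc.trans (hq1 k).le))

end Pos

section Pos2
variable {E : Type*} [NormedAddCommGroup E] [Lattice E] [HasSolidNorm E] [IsOrderedAddMonoid E] [NormedSpace ℝ E]

lemma rsmul_mono {c : ℝ} {x y : E} (hc : 0 ≤ c) (hxy : x ≤ y) : c • x ≤ c • y := by
  have := rsmul_nonneg (E := E) hc (sub_nonneg.mpr hxy)
  rwa [smul_sub, sub_nonneg] at this

lemma rsmul_le_rsmul {c d : ℝ} {x y : E} (hc : 0 ≤ c) (hcd : c ≤ d) (hx : 0 ≤ x) (hxy : x ≤ y) :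
    c • x ≤ d • y := by
  calc c • x ≤ c • y := rsmul_mono hc hxy
    _ ≤ d • y := by
        have := rsmul_nonneg (E := E) (sub_nonneg.mpr hcd) (hx.trans hxy)
        rwa [sub_smul, sub_nonneg] at this

lemma abs_rsmul_le_aux {c : ℝ} (hc : 0 ≤ c) (a : E) : |c • a| ≤ c • |a| := by
  refine sup_le ?_ ?_
  · exact rsmul_mono hc (le_abs_self a)
  · rw [← smul_neg]; exact rsmul_mono hc (neg_le_abs a)

lemma abs_rsmul_le (c : ℝ) (a : E) : |c • a| ≤ |c| • |a| := by
  rcases le_or_gt 0 c with hc | hc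
  · rw [abs_of_nonneg hc]; exact abs_rsmul_le_aux hc a
  · have : c • a = (-c) • (-a) := by rw [neg_smul, smul_neg, neg_neg]
    rw [this, abs_of_neg hc]
    simpa using abs_rsmul_le_aux (neg_nonneg.mpr hc.le) (-a)

lemma norm_le_of_abs_le {a b : E} (h : |a| ≤ b) : ‖a‖ ≤ ‖b‖ :=
  HasSolidNorm.solid (by rwa [abs_of_nonneg ((abs_nonneg a).trans h)])

lemma abs_sub_le' (a b c : E) : |a - c| ≤ |a - b| + |b - c| := by
  calc |a - c| = |(a - b) + (b - c)| := by rw [sub_add_sub_cancel]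
    _ ≤ |a - b| + |b - c| := abs_add_le _ _

end Pos2

section Pos3
variable {E : Type*} [NormedAddCommGroup E] [Lattice E] [HasSolidNorm E] [IsOrderedAddMonoid E] [NormedSpace ℝ E]

omit [NormedSpace ℝ E] in
lemma sum_abs_le' (g : ℕ → E) (n : ℕ) :
    |∑ k ∈ Finset.range n, g k| ≤ ∑ k ∈ Finset.range n, |g k| := by
  induction n with
  | zero => simp
  | succ m ih =>
    rw [Finset.sum_range_succ, Finset.sum_range_succ]
    exact (abs_add_le _ _).trans (add_le_add_left ih _)

omit [NormedSpace ℝ E] in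
/-- closedness of order intervals under limits -/
lemma abs_le_of_tendsto {f : ℕ → E} {l a c : E} {N : ℕ}
    (hf : Filter.Tendsto f Filter.atTop (nhds l)) (h : ∀ n ≥ N, |a - f n| ≤ c) :
    |a - l| ≤ c := by
  have hcont : Continuous fun z : E => |a - z| := by
    have h1 : Continuous fun z : E => a - z := continuous_const.sub continuous_id
    exact h1.sup h1.neg
  have : Filter.Tendsto (fun n => |a - f n|) Filter.atTop (nhds |a - l|) :=
    (hcont.tendsto l).comp hf
  exact le_of_tendsto this (Filter.eventually_atTop.mpr ⟨N, h⟩)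

/-- RU-convergent with regulator implies norm convergence. -/
lemma tendsto_of_ru {f : ℕ → E} {l e : E} (h : RUTendsto f l e) :
    Filter.Tendsto f Filter.atTop (nhds l) := by
  rw [Metric.tendsto_atTop]
  intro δ hδ
  have hε : 0 < δ / (‖e‖ + 1) := by positivity
  obtain ⟨N, hN⟩ := h.2 _ hε
  refine ⟨N, fun n hn => ?_⟩
  rw [dist_eq_norm]
  have h1 : ‖f n - l‖ ≤ ‖(δ / (‖e‖ + 1)) • e‖ := norm_le_of_abs_le (hN n hn)
  have h2 : ‖(δ / (‖e‖ + 1)) • e‖ = (δ / (‖e‖ + 1)) * ‖e‖ := by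
    rw [norm_smul, Real.norm_of_nonneg hε.le]
  have h3 : (δ / (‖e‖ + 1)) * ‖e‖ < δ := by
    rw [div_mul_eq_mul_div, div_lt_iff₀ (by positivity)]
    have : ‖e‖ < ‖e‖ + 1 := by linarith
    nlinarith [norm_nonneg e]
  calc ‖f n - l‖ ≤ _ := h1
    _ = _ := h2
    _ < δ := h3

end Pos3

section AuxNL

variable {E : Type*} [NormedAddCommGroup E] [Lattice E] [HasSolidNorm E] [IsOrderedAddMonoid E] [NormedSpace ℝ E]

omit [NormedSpace ℝ E] in
lemma finset_abs_sum_le {ι : Type*} (s : Finset ι) (g : ι → E) :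
    |∑ i ∈ s, g i| ≤ ∑ i ∈ s, |g i| := by
  induction s using Finset.cons_induction with
  | empty => simp
  | cons a s ha ih =>
    rw [Finset.sum_cons, Finset.sum_cons]
    exact (abs_add_le _ _).trans (add_le_add_right ih _)

/-- RU-Cauchy with regulator implies norm Cauchy. -/
lemma cauchySeq_of_ru {f : ℕ → E} {e : E} (h : RUCauchy f e) : CauchySeq f := by
  rw [Metric.cauchySeq_iff]
  intro δ hδ
  have hε : 0 < δ / (‖e‖ + 1) := by positivity
  obtain ⟨N, hN⟩ := h.2 _ hε
  refine ⟨N, fun m hm n hn => ?_⟩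
  rw [dist_eq_norm]
  have h1 : ‖f m - f n‖ ≤ ‖(δ / (‖e‖ + 1)) • e‖ := norm_le_of_abs_le (hN m hm n hn)
  have h2 : ‖(δ / (‖e‖ + 1)) • e‖ = (δ / (‖e‖ + 1)) * ‖e‖ := by
    rw [norm_smul, Real.norm_of_nonneg hε.le]
  have h3 : (δ / (‖e‖ + 1)) * ‖e‖ < δ := by
    rw [div_mul_eq_mul_div, div_lt_iff₀ (by positivity)]
    nlinarith [norm_nonneg e]
  calc ‖f m - f n‖ ≤ _ := h1
    _ = _ := h2
    _ < δ := h3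

variable {X : Set E}

lemma abs_mem_of_mem (hX : IsVLSublattice X) {a : E} (ha : a ∈ X) : |a| ∈ X := by
  obtain ⟨h0, hadd, hsmul, hsup⟩ := hX
  have hneg : -a ∈ X := by simpa using hsmul (-1) a ha
  exact hsup a ha (-a) hneg

end AuxNL


section Impl
variable {E : Type*} [NormedAddCommGroup E] [Lattice E] [HasSolidNorm E] [IsOrderedAddMonoid E] [NormedSpace ℝ E] [CompleteSpace E]
variable {X : Set E}

lemma exists_approx (hdense : Dense X) (y : E) {δ : ℝ} (hδ : 0 < δ) :
    ∃ x ∈ X, ‖x - y‖ < δ := by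
  obtain ⟨x, hxX, hx⟩ := Metric.mem_closure_iff.mp (hdense y) δ hδ
  exact ⟨x, hxX, by rwa [← dist_eq_norm, dist_comm]⟩

lemma imp15 (hX : IsVLSublattice X) (hdense : Dense X) (h1 : Majorizing X) :
    ∀ y : E, ∃ f : ℕ → E, (∀ n, f n ∈ X) ∧ ∃ e ∈ X, RUTendsto f y e := by
  intro y
  have hex : ∀ n : ℕ, ∃ x ∈ X, ‖x - y‖ < (4⁻¹ : ℝ)^n := fun n =>
    exists_approx hdense y (by positivity)
  choose f hfX hfa using hex
  set d : ℕ → E := fun n => (2:ℝ)^n • |f n - y| with hd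
  have hd0 : ∀ n, 0 ≤ d n := fun n => rsmul_nonneg (by positivity) (abs_nonneg _)
  have hdn : ∀ n, ‖d n‖ ≤ (2⁻¹:ℝ)^n := by
    intro n
    have : ‖d n‖ = (2:ℝ)^n * ‖|f n - y|‖ := by
      rw [hd]; simp [norm_smul, abs_of_nonneg (pow_nonneg (by norm_num : (0:ℝ) ≤ 2) n)]
    rw [this, norm_abs_eq_norm]
    calc (2:ℝ)^n * ‖f n - y‖ ≤ (2:ℝ)^n * (4⁻¹:ℝ)^n := by
          exact mul_le_mul_of_nonneg_left (hfa n).le (by positivity)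
      _ = (2⁻¹:ℝ)^n := by
          rw [← mul_pow]; norm_num
  have hsum : Summable d := by
    apply Summable.of_norm
    exact Summable.of_nonneg_of_le (fun n => norm_nonneg _) hdn
      (summable_geometric_of_lt_one (by norm_num) (by norm_num))
  set e' : E := ∑' n, d n with he'
  have he'0 : 0 ≤ e' := tsum_nonneg hd0
  have hkey : ∀ n, |f n - y| ≤ (2⁻¹:ℝ)^n • e' := by
    intro n
    have h1' : |f n - y| = (2⁻¹:ℝ)^n • d n := by
      rw [hd, smul_smul, ← mul_pow]; norm_num
    rw [h1']
    exact rsmul_mono (by positivity) (hsum.le_tsum n fun m _ => hd0 m)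
  obtain ⟨e, heX, hee⟩ := h1 e' he'0
  refine ⟨f, hfX, e, heX, he'0.trans hee, ?_⟩
  intro ε hε
  obtain ⟨N, hN⟩ := exists_pow_lt_of_lt_one hε (by norm_num : (2⁻¹:ℝ) < 1)
  refine ⟨N, fun n hn => ?_⟩
  refine (hkey n).trans (rsmul_le_rsmul (by positivity) ?_ he'0 hee)
  calc (2⁻¹:ℝ)^n ≤ (2⁻¹:ℝ)^N := pow_le_pow_of_le_one (by norm_num) (by norm_num) hn
    _ ≤ ε := hN.le


lemma imp56 (hX : IsVLSublattice X)
    (h5 : ∀ y : E, ∃ f : ℕ → E, (∀ n, f n ∈ X) ∧ ∃ e ∈ X, RUTendsto f y e) :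
    ⋂₀ {S : Set E | IsVLSublattice S ∧ X ⊆ S ∧ RUCompleteIn S} = Set.univ := by
  rw [Set.eq_univ_iff_forall]
  intro y
  rw [Set.mem_sInter]
  rintro S ⟨hSl, hXS, hScomp⟩
  obtain ⟨f, hfX, e, heX, hRT⟩ := h5 y
  have hRC : RUCauchy f e := by
    refine ⟨hRT.1, fun ε hε => ?_⟩
    obtain ⟨N, hN⟩ := hRT.2 (ε/2) (by positivity)
    refine ⟨N, fun n hn m hm => ?_⟩
    calc |f n - f m| ≤ |f n - y| + |y - f m| := abs_sub_le' _ _ _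
      _ ≤ (ε/2) • e + (ε/2) • e := by
          refine add_le_add (hN n hn) ?_
          rw [abs_sub_comm]; exact hN m hm
      _ = ε • e := by rw [← add_smul]; norm_num
  obtain ⟨l, hlS, e₂, he₂S, hRT₂⟩ := hScomp f (fun n => hXS (hfX n)) ⟨e, hXS heX, hRC⟩
  have : y = l := tendsto_nhds_unique (tendsto_of_ru hRT) (tendsto_of_ru hRT₂)
  exact this ▸ hlS


lemma imp61 (hX : IsVLSublattice X)
    (h6 : ⋂₀ {S : Set E | IsVLSublattice S ∧ X ⊆ S ∧ RUCompleteIn S} = Set.univ) :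
    Majorizing X := by
  obtain ⟨hX0, hXadd, hXsmul, hXsup⟩ := hX
  set S : Set E := {x : E | ∃ u ∈ X, |x| ≤ u} with hS
  have hSlat : IsVLSublattice S := by
    refine ⟨⟨0, hX0, by simp⟩, ?_, ?_, ?_⟩
    · rintro a ⟨u, huX, hu⟩ b ⟨v, hvX, hv⟩
      exact ⟨u + v, hXadd u huX v hvX, (abs_add_le a b).trans (add_le_add hu hv)⟩
    · rintro c a ⟨u, huX, hu⟩
      exact ⟨|c| • u, hXsmul |c| u huX,
        (abs_rsmul_le c a).trans (rsmul_mono (abs_nonneg c) hu)⟩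
    · rintro a ⟨u, huX, hu⟩ b ⟨v, hvX, hv⟩
      refine ⟨u ⊔ v, hXsup u huX v hvX, ?_⟩
      refine sup_le (sup_le_sup ((le_abs_self a).trans hu) ((le_abs_self b).trans hv)) ?_
      calc -(a ⊔ b) ≤ -a := neg_le_neg le_sup_left
        _ ≤ |a| := neg_le_abs a
        _ ≤ u := hu
        _ ≤ u ⊔ v := le_sup_left
  have hXS : X ⊆ S := fun a ha => ⟨|a|, abs_mem_of_mem ⟨hX0, hXadd, hXsmul, hXsup⟩ ha, le_rfl⟩
  have hScomp : RUCompleteIn S := by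
    intro f hfS ⟨e, heS, hRC⟩
    have hCS : CauchySeq f := cauchySeq_of_ru hRC
    obtain ⟨l, hl⟩ := cauchySeq_tendsto_of_complete hCS
    have hRT : RUTendsto f l e := by
      refine ⟨hRC.1, fun ε hε => ?_⟩
      obtain ⟨N, hN⟩ := hRC.2 ε hε
      exact ⟨N, fun n hn => abs_le_of_tendsto hl (fun m hm => hN n hn m hm)⟩
    have hlS : l ∈ S := by
      obtain ⟨M, hM⟩ := hRT.2 1 one_pos
      obtain ⟨u, huX, hu⟩ := hfS M
      obtain ⟨v, hvX, hv⟩ := heS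
      refine ⟨u + v, hXadd u huX v hvX, ?_⟩
      calc |l| = |(l - f M) + f M| := by rw [sub_add_cancel]
        _ ≤ |l - f M| + |f M| := abs_add_le _ _
        _ = |f M - l| + |f M| := by rw [abs_sub_comm]
        _ ≤ (1:ℝ) • e + u := add_le_add (hM M le_rfl) hu
        _ = e + u := by rw [one_smul]
        _ ≤ v + u := add_le_add_left ((le_abs_self e).trans hv) u
        _ = u + v := add_comm _ _
    exact ⟨l, hlS, e, heS, hRT⟩
  have hSuniv : S = Set.univ := by
    apply Set.eq_univ_of_univ_subset
    rw [← h6]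
    exact Set.sInter_subset_of_mem ⟨hSlat, hXS, hScomp⟩
  intro x hx
  have : x ∈ S := hSuniv ▸ Set.mem_univ x
  obtain ⟨u, huX, hu⟩ := this
  exact ⟨u, huX, (le_abs_self x).trans hu⟩


lemma subseq_fast {f : ℕ → E} (hf : CauchySeq f) (r : ℝ) (hr : 0 < r) :
    ∃ φ : ℕ → ℕ, StrictMono φ ∧ ∀ n, ‖f (φ (n+1)) - f (φ n)‖ < r^n := by
  have hV : ∀ n : ℕ, {p : E × E | dist p.1 p.2 < r^n} ∈ uniformity E :=
    fun n => Metric.dist_mem_uniformity (by positivity)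
  obtain ⟨φ, hφm, hφ⟩ := hf.subseq_mem hV
  exact ⟨φ, hφm, fun n => by simpa [dist_eq_norm] using hφ n⟩

lemma imp12 (h1 : Majorizing X) :
    ∀ f : ℕ → E, (∀ n, f n ∈ X) → CauchySeq f →
      ∃ φ : ℕ → ℕ, StrictMono φ ∧ ∃ u ∈ X, ∀ n, |f (φ n)| ≤ u := by
  intro f hfX hf
  obtain ⟨φ, hφm, hφ⟩ := subseq_fast hf (2⁻¹ : ℝ) (by norm_num)
  set d : ℕ → E := fun k => |f (φ (k+1)) - f (φ k)| with hd
  have hd0 : ∀ k, 0 ≤ d k := fun k => abs_nonneg _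
  have hsum : Summable d := by
    apply Summable.of_norm
    refine Summable.of_nonneg_of_le (fun n => norm_nonneg _) (fun n => ?_)
      (summable_geometric_of_lt_one (by norm_num) (by norm_num : (2⁻¹:ℝ) < 1))
    rw [hd]; simpa [norm_abs_eq_norm] using (hφ n).le
  set g : E := ∑' k, d k with hg
  have hbound : ∀ n, |f (φ n)| ≤ |f (φ 0)| + g := by
    intro n
    have htel : f (φ n) - f (φ 0) = ∑ k ∈ Finset.range n, (f (φ (k+1)) - f (φ k)) :=
      (Finset.sum_range_sub (fun k => f (φ k)) n).symm
    calc |f (φ n)| = |f (φ 0) + (f (φ n) - f (φ 0))| := by rw [add_sub_cancel]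
      _ ≤ |f (φ 0)| + |f (φ n) - f (φ 0)| := abs_add_le _ _
      _ ≤ |f (φ 0)| + g := by
          refine add_le_add_right ?_ _
          rw [htel]
          refine (finset_abs_sum_le _ _).trans ?_
          exact hsum.sum_le_tsum _ (fun k _ => hd0 k)
  have hw : (0:E) ≤ |f (φ 0)| + g :=
    add_nonneg (abs_nonneg _) (tsum_nonneg hd0)
  obtain ⟨u, huX, hu⟩ := h1 _ hw
  exact ⟨φ, hφm, u, huX, fun n => (hbound n).trans hu⟩

lemma imp23 (hX : IsVLSublattice X)
    (h2 : ∀ f : ℕ → E, (∀ n, f n ∈ X) → CauchySeq f →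
      ∃ φ : ℕ → ℕ, StrictMono φ ∧ ∃ u ∈ X, ∀ n, |f (φ n)| ≤ u) :
    ∀ f : ℕ → E, (∀ n, f n ∈ X) → CauchySeq f → Monotone f →
      ∃ u ∈ X, ∀ n, |f n| ≤ u := by
  intro f hfX hf hmono
  obtain ⟨φ, hφm, u, huX, hu⟩ := h2 f hfX hf
  refine ⟨|f 0| ⊔ u, hX.2.2.2 _ (abs_mem_of_mem hX (hfX 0)) u huX, fun n => ?_⟩
  refine sup_le ?_ ?_
  · calc f n ≤ f (φ n) := hmono (hφm.le_apply)
      _ ≤ |f (φ n)| := le_abs_self _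
      _ ≤ u := hu n
      _ ≤ _ := le_sup_right
  · calc -f n ≤ -f 0 := neg_le_neg (hmono (Nat.zero_le n))
      _ ≤ |f 0| := neg_le_abs _
      _ ≤ _ := le_sup_left

lemma imp31 (hX : IsVLSublattice X) (hdense : Dense X)
    (h3 : ∀ f : ℕ → E, (∀ n, f n ∈ X) → CauchySeq f → Monotone f →
      ∃ u ∈ X, ∀ n, |f n| ≤ u) :
    Majorizing X := by
  intro x hx
  have hex : ∀ n : ℕ, ∃ z ∈ X, ‖z - x‖ < (2⁻¹:ℝ)^n := fun n =>
    exists_approx hdense x (by positivity)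
  choose xs hxsX hxs using hex
  set g : ℕ → E := fun n => Nat.rec (xs 0) (fun k gk => gk ⊔ xs (k+1)) n with hgdef
  have hg0 : g 0 = xs 0 := rfl
  have hgsucc : ∀ k, g (k+1) = g k ⊔ xs (k+1) := fun k => rfl
  have hgX : ∀ n, g n ∈ X := by
    intro n
    induction n with
    | zero => exact hxsX 0
    | succ k ih => rw [hgsucc]; exact hX.2.2.2 _ ih _ (hxsX (k+1))
  have hgmono : Monotone g := monotone_nat_of_le_succ fun k => by rw [hgsucc]; exact le_sup_left
  have hgx : ∀ n, xs n ≤ g n := by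
    intro n
    cases n with
    | zero => exact le_of_eq hg0.symm
    | succ k => rw [hgsucc]; exact le_sup_right
  have hstep : ∀ n, |g (n+1) - g n| ≤ |xs (n+1) - xs n| := by
    intro n
    have h1 : g (n+1) - g n ≤ |xs (n+1) - xs n| := by
      rw [hgsucc, sub_le_iff_le_add]
      refine sup_le (le_add_of_nonneg_left (abs_nonneg _)) ?_
      calc xs (n+1) = xs n + (xs (n+1) - xs n) := by abel
        _ ≤ g n + |xs (n+1) - xs n| := add_le_add (hgx n) (le_abs_self _)
        _ = |xs (n+1) - xs n| + g n := add_comm _ _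
    have h2 : 0 ≤ g (n+1) - g n := sub_nonneg.mpr (hgmono (Nat.le_succ n))
    rwa [abs_of_nonneg h2]
  have hgc : CauchySeq g := by
    apply cauchySeq_of_summable_dist
    refine Summable.of_nonneg_of_le (fun n => dist_nonneg) (fun n => ?_)
      (((summable_geometric_of_lt_one (by norm_num) (by norm_num : (2⁻¹:ℝ) < 1)).mul_left 3))
    have h1 : dist (g n) (g n.succ) = ‖g (n+1) - g n‖ := by
      rw [dist_comm, dist_eq_norm]
    rw [h1]
    have h2 : ‖g (n+1) - g n‖ ≤ ‖xs (n+1) - xs n‖ := by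
      have := norm_le_of_abs_le (hstep n)
      rwa [norm_abs_eq_norm] at this
    refine h2.trans ?_
    calc ‖xs (n+1) - xs n‖ = ‖(xs (n+1) - x) - (xs n - x)‖ := by abel_nf
      _ ≤ ‖xs (n+1) - x‖ + ‖xs n - x‖ := norm_sub_le _ _
      _ ≤ (2⁻¹:ℝ)^(n+1) + (2⁻¹:ℝ)^n := add_le_add (hxs (n+1)).le (hxs n).le
      _ ≤ 3 * (2⁻¹:ℝ)^n := by
          rw [pow_succ]
          nlinarith [pow_nonneg (by norm_num : (0:ℝ) ≤ 2⁻¹) n]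
  obtain ⟨u, huX, hu⟩ := h3 g hgX hgc hgmono
  refine ⟨u, huX, ?_⟩
  have hxsx : Filter.Tendsto xs Filter.atTop (nhds x) := by
    rw [Metric.tendsto_atTop]
    intro δ hδ
    obtain ⟨N, hN⟩ := exists_pow_lt_of_lt_one hδ (by norm_num : (2⁻¹:ℝ) < 1)
    refine ⟨N, fun n hn => ?_⟩
    rw [dist_eq_norm]
    calc ‖xs n - x‖ < (2⁻¹:ℝ)^n := hxs n
      _ ≤ (2⁻¹:ℝ)^N := pow_le_pow_of_le_one (by norm_num) (by norm_num) hn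
      _ < δ := hN
  refine le_of_tendsto hxsx (Filter.Eventually.of_forall fun n => ?_)
  exact (hgx n).trans ((le_abs_self _).trans (hu n))

lemma imp14 (h1 : Majorizing X) :
    ∀ f : ℕ → E, (∀ n, f n ∈ X) → CauchySeq f →
      ∃ φ : ℕ → ℕ, StrictMono φ ∧ ∃ e ∈ X, RUCauchy (f ∘ φ) e := by
  intro f hfX hf
  obtain ⟨φ, hφm, hφ⟩ := subseq_fast hf (4⁻¹ : ℝ) (by norm_num)
  set d : ℕ → E := fun k => (2:ℝ)^k • |f (φ (k+1)) - f (φ k)| with hd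
  have hd0 : ∀ k, 0 ≤ d k := fun k => rsmul_nonneg (by positivity) (abs_nonneg _)
  have hsum : Summable d := by
    apply Summable.of_norm
    refine Summable.of_nonneg_of_le (fun n => norm_nonneg _) (fun n => ?_)
      (summable_geometric_of_lt_one (by norm_num) (by norm_num : (2⁻¹:ℝ) < 1))
    rw [hd]
    have : ‖(2:ℝ)^n • |f (φ (n+1)) - f (φ n)|‖ = (2:ℝ)^n * ‖f (φ (n+1)) - f (φ n)‖ := by
      rw [norm_smul, norm_abs_eq_norm, Real.norm_of_nonneg (by positivity)]
    rw [this]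
    calc (2:ℝ)^n * ‖f (φ (n+1)) - f (φ n)‖ ≤ (2:ℝ)^n * (4⁻¹:ℝ)^n :=
          mul_le_mul_of_nonneg_left (hφ n).le (by positivity)
      _ = (2⁻¹:ℝ)^n := by rw [← mul_pow]; norm_num
  set e' : E := ∑' k, d k with he'
  have he'0 : 0 ≤ e' := tsum_nonneg hd0
  have hkey : ∀ n m, n ≤ m → |f (φ m) - f (φ n)| ≤ (2⁻¹:ℝ)^n • e' := by
    intro n m hnm
    have htel : f (φ m) - f (φ n) = ∑ k ∈ Finset.Ico n m, (f (φ (k+1)) - f (φ k)) := by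
      rw [Finset.sum_Ico_eq_sub _ hnm, Finset.sum_range_sub (fun k => f (φ k)),
        Finset.sum_range_sub (fun k => f (φ k))]
      abel
    rw [htel]
    refine (finset_abs_sum_le _ _).trans ?_
    have hterm : ∀ k ∈ Finset.Ico n m, |f (φ (k+1)) - f (φ k)| ≤ (2⁻¹:ℝ)^n • d k := by
      intro k hk
      have hkn : n ≤ k := (Finset.mem_Ico.mp hk).1
      have h1 : |f (φ (k+1)) - f (φ k)| = (2⁻¹:ℝ)^k • d k := by
        rw [hd, smul_smul, ← mul_pow]; norm_num
      rw [h1]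
      exact rsmul_le_rsmul (by positivity)
        (pow_le_pow_of_le_one (by norm_num) (by norm_num) hkn) (hd0 k) le_rfl
    refine (Finset.sum_le_sum hterm).trans ?_
    rw [← Finset.smul_sum]
    exact rsmul_mono (by positivity) (hsum.sum_le_tsum _ (fun k _ => hd0 k))
  obtain ⟨e, heX, hee⟩ := h1 e' he'0
  refine ⟨φ, hφm, e, heX, he'0.trans hee, ?_⟩
  intro ε hε
  obtain ⟨N, hN⟩ := exists_pow_lt_of_lt_one hε (by norm_num : (2⁻¹:ℝ) < 1)
  refine ⟨N, fun n hn m hm => ?_⟩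
  have hbig : ∀ a b : ℕ, N ≤ a → a ≤ b → |f (φ b) - f (φ a)| ≤ ε • e := by
    intro a b ha hab
    refine (hkey a b hab).trans (rsmul_le_rsmul (by positivity) ?_ he'0 hee)
    calc (2⁻¹:ℝ)^a ≤ (2⁻¹:ℝ)^N := pow_le_pow_of_le_one (by norm_num) (by norm_num) ha
      _ ≤ ε := hN.le
  rcases le_total n m with h | h
  · rw [Function.comp_apply, Function.comp_apply, abs_sub_comm]
    exact hbig n m hn h
  · exact hbig m n hm h

lemma imp42 (hX : IsVLSublattice X)
    (h4 : ∀ f : ℕ → E, (∀ n, f n ∈ X) → CauchySeq f →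
      ∃ φ : ℕ → ℕ, StrictMono φ ∧ ∃ e ∈ X, RUCauchy (f ∘ φ) e) :
    ∀ f : ℕ → E, (∀ n, f n ∈ X) → CauchySeq f →
      ∃ φ : ℕ → ℕ, StrictMono φ ∧ ∃ u ∈ X, ∀ n, |f (φ n)| ≤ u := by
  intro f hfX hf
  obtain ⟨φ, hφm, e, heX, hRC⟩ := h4 f hfX hf
  obtain ⟨N, hN⟩ := hRC.2 1 one_pos
  set v : ℕ → E := fun n => Nat.rec |f (φ 0)| (fun k vk => vk ⊔ |f (φ (k+1))|) n with hv
  have hvsucc : ∀ k, v (k+1) = v k ⊔ |f (φ (k+1))| := fun k => rfl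
  have hvX : ∀ n, v n ∈ X := by
    intro n
    induction n with
    | zero => exact abs_mem_of_mem hX (hfX (φ 0))
    | succ k ih => rw [hvsucc]; exact hX.2.2.2 _ ih _ (abs_mem_of_mem hX (hfX (φ (k+1))))
  have hvmono : Monotone v := monotone_nat_of_le_succ fun k => by rw [hvsucc]; exact le_sup_left
  have hvb : ∀ k, k ≤ N → |f (φ k)| ≤ v N := by
    intro k hk
    refine le_trans ?_ (hvmono hk)
    cases k with
    | zero => exact le_rfl
    | succ j => rw [hvsucc]; exact le_sup_right
  refine ⟨φ, hφm, v N ⊔ (|f (φ N)| + e), hX.2.2.2 _ (hvX N) _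
    (hX.2.1 _ (abs_mem_of_mem hX (hfX (φ N))) _ heX), fun n => ?_⟩
  rcases le_total n N with h | h
  · exact (hvb n h).trans le_sup_left
  · refine le_trans ?_ le_sup_right
    calc |f (φ n)| = |f (φ N) + (f (φ n) - f (φ N))| := by rw [add_sub_cancel]
      _ ≤ |f (φ N)| + |f (φ n) - f (φ N)| := abs_add_le _ _
      _ ≤ |f (φ N)| + e := by
          refine add_le_add_right ?_ _
          have := hN n h N le_rfl
          rwa [one_smul] at this

end Impl

theorem normed_lattice_majorizing_in_completion_tfae
    {E : Type*} [NormedAddCommGroup E] [Lattice E] [HasSolidNorm E] [IsOrderedAddMonoid E]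
    [NormedSpace ℝ E] [CompleteSpace E]
    {X : Set E} (hX : IsVLSublattice X) (hdense : Dense X) :
    List.TFAE [
      Majorizing X,
      ∀ f : ℕ → E, (∀ n, f n ∈ X) → CauchySeq f →
        ∃ φ : ℕ → ℕ, StrictMono φ ∧ ∃ u ∈ X, ∀ n, |f (φ n)| ≤ u,
      ∀ f : ℕ → E, (∀ n, f n ∈ X) → CauchySeq f → Monotone f →
        ∃ u ∈ X, ∀ n, |f n| ≤ u,
      ∀ f : ℕ → E, (∀ n, f n ∈ X) → CauchySeq f →
        ∃ φ : ℕ → ℕ, StrictMono φ ∧ ∃ e ∈ X, RUCauchy (f ∘ φ) e,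
      ∀ y : E, ∃ f : ℕ → E, (∀ n, f n ∈ X) ∧ ∃ e ∈ X, RUTendsto f y e,
      ⋂₀ {S : Set E | IsVLSublattice S ∧ X ⊆ S ∧ RUCompleteIn S} = Set.univ ] := by
  tfae_have 1 → 5 := imp15 hX hdense
  tfae_have 5 → 6 := imp56 hX
  tfae_have 6 → 1 := imp61 hX
  tfae_have 1 → 2 := imp12
  tfae_have 2 → 3 := imp23 hX
  tfae_have 3 → 1 := imp31 hX hdense
  tfae_have 1 → 4 := imp14
  tfae_have 4 → 2 := imp42 hX
  tfae_finish
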